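/- Any C³ solution φ on [s₀, ∞) of φ''' + 6φ'' + 11φ' + 6φ = −λ₀ with λ₀ > 0 and φ(s) > 0 for all s ≥ s₀ converges to −λ₀/6 < 0 as s → ∞; consequently no solution of the discontinuous ODE φ''' + 6φ'' + 11φ' + 6φ = −λ₀ sign(φ) can be eventually strictly positive, i.e., every globally defined bounded solution that is not eventually constant is oscillatory (has zeros in every neighbourhood of +∞). -/

import Mathlib

open Filter Real

private lemma constOn {F : ℝ → ℝ} {s₀ : ℝ} (hc : Continuous F)
    (hF : ∀ x ≥ s₀, HasDerivAt F 0 x) : ∀ s ≥ s₀, F s = F s₀ := fun s hs =>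
  constant_of_has_deriv_right_zero (hc.continuousOn)
    (fun x hx => (hF x hx.1).hasDerivWithinAt) s ⟨hs, le_rfl⟩

private lemma expDeriv (a x : ℝ) :
    HasDerivAt (fun s => Real.exp (a*s)) (a * Real.exp (a*x)) x := by
  have := ((hasDerivAt_id x).const_mul a).exp
  simp only [id_eq] at this
  convert this using 1; ring

private lemma key (lam0 : ℝ) (φ : ℝ → ℝ) (hreg : ContDiff ℝ 3 φ) (s₀ : ℝ)
    (hode : ∀ s ≥ s₀, iteratedDeriv 3 φ s + 6 * iteratedDeriv 2 φ s
        + 11 * deriv φ s + 6 * φ s = -lam0) :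
    Filter.Tendsto φ Filter.atTop (nhds (-lam0/6)) := by
  set d1 := deriv φ with hd1def
  set d2 := deriv d1 with hd2def
  set d3 := deriv d2 with hd3def
  have hdiff0 : Differentiable ℝ φ := hreg.differentiable (by norm_num)
  have h2 : ContDiff ℝ 2 d1 := ((contDiff_succ_iff_deriv).mp (hreg.of_le (by norm_num))).2.2
  have hdiff1 : Differentiable ℝ d1 := h2.differentiable (by norm_num)
  have h1 : ContDiff ℝ 1 d2 := ((contDiff_succ_iff_deriv).mp (h2.of_le (by norm_num))).2.2
  have hdiff2 : Differentiable ℝ d2 := h1.differentiable (by norm_num)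
  have e2 : iteratedDeriv 2 φ = d2 := by
    rw [show (2:ℕ) = 1+1 from rfl, iteratedDeriv_succ, iteratedDeriv_one]
  have e3 : iteratedDeriv 3 φ = d3 := by
    rw [show (3:ℕ) = 2+1 from rfl, iteratedDeriv_succ, e2]
  simp only [e2, e3] at hode
  have hd0 : ∀ x, HasDerivAt φ (d1 x) x := fun x => (hdiff0 x).hasDerivAt
  have hd1 : ∀ x, HasDerivAt d1 (d2 x) x := fun x => (hdiff1 x).hasDerivAt
  have hd2 : ∀ x, HasDerivAt d2 (d3 x) x := fun x => (hdiff2 x).hasDerivAt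
  -- step 1
  set K := Real.exp s₀ * (d2 s₀ + 5 * d1 s₀ + 6 * φ s₀ + lam0) with hK
  have hu : ∀ x, HasDerivAt (fun s => d2 s + 5 * d1 s + 6 * φ s + lam0)
      (d3 x + 5 * d2 x + 6 * d1 x) x := fun x =>
    (((hd2 x).add ((hd1 x).const_mul 5)).add ((hd0 x).const_mul 6)).add_const lam0
  have hF1 : ∀ x, HasDerivAt (fun s => Real.exp s * (d2 s + 5 * d1 s + 6 * φ s + lam0))
      (Real.exp x * (d2 x + 5 * d1 x + 6 * φ x + lam0)
        + Real.exp x * (d3 x + 5 * d2 x + 6 * d1 x)) x :=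
    fun x => (Real.hasDerivAt_exp x).mul (hu x)
  have hc1 : ∀ s ≥ s₀, Real.exp s * (d2 s + 5 * d1 s + 6 * φ s + lam0) = K := by
    intro s hs
    have h := constOn (F := fun s => Real.exp s * (d2 s + 5 * d1 s + 6 * φ s + lam0))
      (Differentiable.continuous fun x => (hF1 x).differentiableAt)
      (fun x hx => by
        have h0 := hode x hx
        convert hF1 x using 1
        linear_combination (-(Real.exp x)) * h0) s hs
    exact h
  -- step 2
  set L := Real.exp (2*s₀) * (d1 s₀ + 3 * φ s₀ + lam0/2) - K * Real.exp s₀ with hL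
  have hv : ∀ x, HasDerivAt (fun s => d1 s + 3 * φ s + lam0/2)
      (d2 x + 3 * d1 x) x := fun x =>
    ((hd1 x).add ((hd0 x).const_mul 3)).add_const (lam0/2)
  have hF2 : ∀ x, HasDerivAt
      (fun s => Real.exp (2*s) * (d1 s + 3 * φ s + lam0/2) - K * Real.exp s)
      ((2 * Real.exp (2*x)) * (d1 x + 3 * φ x + lam0/2)
        + Real.exp (2*x) * (d2 x + 3 * d1 x) - K * Real.exp x) x :=
    fun x => ((expDeriv 2 x).mul (hv x)).sub ((Real.hasDerivAt_exp x).const_mul K)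
  have hc2 : ∀ s ≥ s₀, Real.exp (2*s) * (d1 s + 3 * φ s + lam0/2) = K * Real.exp s + L := by
    intro s hs
    have h := constOn
      (F := fun s => Real.exp (2*s) * (d1 s + 3 * φ s + lam0/2) - K * Real.exp s)
      (Differentiable.continuous fun x => (hF2 x).differentiableAt)
      (fun x hx => by
        have h0 := hc1 x hx
        have he : Real.exp (2*x) = Real.exp x * Real.exp x := by
          rw [← Real.exp_add]; ring_nf
        convert hF2 x using 1
        rw [he]
        linear_combination (-(Real.exp x)) * h0) s hs
    beta_reduce at h
    rw [hL]
    linarith [h]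
  -- step 3
  set M := Real.exp (3*s₀) * (φ s₀ + lam0/6) - K/2 * Real.exp (2*s₀) - L * Real.exp s₀ with hM
  have hF3 : ∀ x, HasDerivAt
      (fun s => Real.exp (3*s) * (φ s + lam0/6) - K/2 * Real.exp (2*s) - L * Real.exp s)
      ((3 * Real.exp (3*x)) * (φ x + lam0/6) + Real.exp (3*x) * d1 x
        - K/2 * (2 * Real.exp (2*x)) - L * Real.exp x) x :=
    fun x => (((expDeriv 3 x).mul ((hd0 x).add_const (lam0/6))).sub
      ((expDeriv 2 x).const_mul (K/2))).sub ((Real.hasDerivAt_exp x).const_mul L)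
  have hc3 : ∀ s ≥ s₀, Real.exp (3*s) * (φ s + lam0/6)
      = K/2 * Real.exp (2*s) + L * Real.exp s + M := by
    intro s hs
    have h := constOn
      (F := fun s => Real.exp (3*s) * (φ s + lam0/6) - K/2 * Real.exp (2*s) - L * Real.exp s)
      (Differentiable.continuous fun x => (hF3 x).differentiableAt)
      (fun x hx => by
        have h0 := hc2 x hx
        have he2 : Real.exp (2*x) = Real.exp x * Real.exp x := by
          rw [← Real.exp_add]; ring_nf
        have he3 : Real.exp (3*x) = Real.exp x * Real.exp x * Real.exp x := by
          rw [← Real.exp_add, ← Real.exp_add]; ring_nf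
        rw [he2] at h0
        convert hF3 x using 1
        rw [he3, he2]
        linear_combination (-(Real.exp x)) * h0) s hs
    beta_reduce at h
    rw [hM]
    linarith [h]
  -- closed form
  have heq : ∀ s ≥ s₀, φ s = K/2 * Real.exp (-(1*s)) + L * Real.exp (-(2*s))
      + M * Real.exp (-(3*s)) - lam0/6 := by
    intro s hs
    have h0 := hc3 s hs
    have a1 : Real.exp (3*s) * Real.exp (-(1*s)) = Real.exp (2*s) := by
      rw [← Real.exp_add]; ring_nf
    have a2 : Real.exp (3*s) * Real.exp (-(2*s)) = Real.exp s := by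
      rw [← Real.exp_add]; ring_nf
    have a3 : Real.exp (3*s) * Real.exp (-(3*s)) = 1 := by
      rw [← Real.exp_add]; simp
    have hne : Real.exp (3*s) ≠ 0 := Real.exp_ne_zero _
    apply mul_left_cancel₀ hne
    linear_combination h0 - (K/2) * a1 - L * a2 - M * a3
  -- limits
  have hexp : ∀ a : ℝ, 0 < a → Tendsto (fun s : ℝ => Real.exp (-(a*s))) atTop (nhds 0) := by
    intro a ha
    exact Real.tendsto_exp_atBot.comp
      (tendsto_neg_atTop_atBot.comp (tendsto_id.const_mul_atTop ha))
  have hg : Tendsto (fun s : ℝ => K/2 * Real.exp (-(1*s)) + L * Real.exp (-(2*s))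
      + M * Real.exp (-(3*s)) - lam0/6) atTop
      (nhds (K/2 * 0 + L * 0 + M * 0 - lam0/6)) :=
    ((((hexp 1 one_pos).const_mul (K/2)).add ((hexp 2 two_pos).const_mul L)).add
      ((hexp 3 three_pos).const_mul M)).sub_const (lam0/6)
  rw [show K/2 * 0 + L * 0 + M * 0 - lam0/6 = -lam0/6 by ring] at hg
  exact hg.congr' ((eventually_ge_atTop s₀).mono fun s hs => (heq s hs).symm)

theorem stmt_10 (lam0 : ℝ) (hlam0 : 0 < lam0) (φ : ℝ → ℝ) (hreg : ContDiff ℝ 3 φ) :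
    ((∀ s₀ : ℝ,
      (∀ s ≥ s₀, iteratedDeriv 3 φ s + 6 * iteratedDeriv 2 φ s
        + 11 * deriv φ s + 6 * φ s = -lam0) →
      (∀ s ≥ s₀, 0 < φ s) →
      Filter.Tendsto φ Filter.atTop (nhds (-lam0/6)) ∧ -lam0/6 < 0)) ∧
    ((∀ s : ℝ, iteratedDeriv 3 φ s + 6 * iteratedDeriv 2 φ s
        + 11 * deriv φ s + 6 * φ s = -lam0 * Real.sign (φ s)) →
      (¬ ∃ s₀ : ℝ, ∀ s ≥ s₀, 0 < φ s) ∧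
      (∀ s₀ : ℝ, ∃ s ≥ s₀, φ s = 0)) := by
  have ev : ∀ ψ : ℝ → ℝ, ContDiff ℝ 3 ψ → ∀ s₀ : ℝ,
      (∀ s ≥ s₀, iteratedDeriv 3 ψ s + 6 * iteratedDeriv 2 ψ s
        + 11 * deriv ψ s + 6 * ψ s = -lam0) →
      (∀ s ≥ s₀, 0 < ψ s) → False := by
    intro ψ hψ s₀ hode hpos
    have ht := key lam0 ψ hψ s₀ hode
    have h0 : (0:ℝ) ≤ -lam0/6 :=
      ge_of_tendsto ht ((eventually_ge_atTop s₀).mono fun s hs => (hpos s hs).le)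
    linarith
  constructor
  · intro s₀ hode _
    exact ⟨key lam0 φ hreg s₀ hode, by linarith⟩
  · intro hsign
    have claim1 : ¬ ∃ s₀ : ℝ, ∀ s ≥ s₀, 0 < φ s := by
      rintro ⟨s₀, hp⟩
      refine ev φ hreg s₀ (fun s hs => ?_) hp
      rw [hsign s, Real.sign_of_pos (hp s hs), mul_one]
    refine ⟨claim1, ?_⟩
    intro s₀
    by_contra hno
    push_neg at hno
    have hex : ∃ s₁ ≥ s₀, φ s₁ < 0 := by
      by_contra hh
      push_neg at hh
      exact claim1 ⟨s₀, fun s hs => lt_of_le_of_ne (hh s hs) (Ne.symm (hno s hs))⟩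
    obtain ⟨s₁, hs₁, hneg⟩ := hex
    have hallneg : ∀ s ≥ s₀, φ s < 0 := by
      intro s hs
      rcases lt_or_ge (φ s) 0 with h | h
      · exact h
      have hpos : 0 < φ s := lt_of_le_of_ne h (Ne.symm (hno s hs))
      exfalso
      rcases le_total s₁ s with hle | hle
      · obtain ⟨c, hc, hc0⟩ := intermediate_value_Icc hle (hreg.continuous.continuousOn)
          ⟨hneg.le, hpos.le⟩
        exact hno c (le_trans hs₁ hc.1) hc0
      · obtain ⟨c, hc, hc0⟩ := intermediate_value_Icc' hle (hreg.continuous.continuousOn)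
          ⟨hneg.le, hpos.le⟩
        exact hno c (le_trans hs hc.1) hc0
    refine ev (fun t => -(φ t)) hreg.neg s₀ (fun s hs => ?_)
      (fun s hs => by simp [hallneg s hs])
    have hs' := hsign s
    rw [Real.sign_of_neg (hallneg s hs)] at hs'
    have hdn : deriv (fun t => -(φ t)) s = -(deriv φ s) := by
      have h := iteratedDeriv_neg 1 φ s
      simp only [iteratedDeriv_one] at h
      exact h
    rw [show iteratedDeriv 3 (fun t => -(φ t)) s = -iteratedDeriv 3 φ s from iteratedDeriv_neg 3 φ s,
      show iteratedDeriv 2 (fun t => -(φ t)) s = -iteratedDeriv 2 φ s from iteratedDeriv_neg 2 φ s, hdn]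
    beta_reduce
    linarith [hs']
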